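/- The candidate slanting function G for the max operation fails: let 1 ≤ p < ∞, let u ∈ ℓ^p be a sequence with infinitely many nonzero entries, and define G(v)h coordinatewise as h_k if v_k > 0, δ·h_k if v_k = 0 (for any fixed δ ∈ ℝ), and 0 if v_k < 0. Then for h^n defined by h^n_k = -2u_k if k = n and 0 otherwise, one has ‖h^n‖_p → 0, while for every n with u_n ≠ 0: ‖max(u + h^n, 0) - max(u, 0) - G(u + h^n)h^n‖_q / ‖h^n‖_p = 1/2. Hence G is not a slanting function for u ↦ max(u,0) from ℓ^p to ℓ^q. -/

import Mathlib

open scoped ENNReal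

/-- Norm of a single-coordinate element of `lp`. -/
lemma aux_norm_single_coord (q : ℝ≥0∞) (hq : 1 ≤ q) (n : ℕ) (c : ℝ) (f : ℕ → ℝ)
    (hf : ∀ k, f k = if k = n then c else 0) (mem : Memℓp f q) :
    ‖(⟨f, mem⟩ : lp (fun _ : ℕ => ℝ) q)‖ = |c| := by
  have heq : (⟨f, mem⟩ : lp (fun _ : ℕ => ℝ) q) = lp.single q n c := by
    apply Subtype.ext
    funext k
    by_cases hk : k = n
    · subst hk
      show f k = _
      rw [hf, if_pos rfl, lp.single_apply_self]
    · show f k = _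
      rw [hf, if_neg hk, lp.single_apply_ne (E := fun _ : ℕ => ℝ) q n c hk]
  rw [heq]
  rcases eq_or_ne q ∞ with rfl | hq'
  · apply le_antisymm
    · apply lp.norm_le_of_forall_le (abs_nonneg c)
      intro i
      by_cases hi : i = n
      · subst hi; rw [lp.single_apply_self]; exact le_of_eq (Real.norm_eq_abs c)
      · rw [lp.single_apply_ne (E := fun _ : ℕ => ℝ) ∞ n c hi]
        simpa using abs_nonneg c
    · have h := lp.norm_apply_le_norm (E := fun _ : ℕ => ℝ)
        ENNReal.top_ne_zero (lp.single ∞ n c) n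
      rwa [lp.single_apply_self, Real.norm_eq_abs] at h
  · have hq0 : 0 < q.toReal :=
      ENNReal.toReal_pos (zero_lt_one.trans_le hq).ne' hq'
    simpa using lp.norm_single (E := fun _ : ℕ => ℝ) (zero_lt_one.trans_le hq) n c

theorem stmt_6 (p q : ℝ≥0∞) (hp : 1 ≤ p) (hp' : p ≠ ∞) (hq : 1 ≤ q)
    (δ : ℝ) (u : lp (fun _ : ℕ => ℝ) p)
    (hu : {k | u k ≠ 0}.Infinite)
    -- `hⁿ` and the Newton remainder `N n = max(u+hⁿ,0) - max(u,0) - G(u+hⁿ)hⁿ`: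
    (hseq : ℕ → ℕ → ℝ) (hhseq : ∀ n k, hseq n k = if k = n then -2 * u k else 0)
    (N : ℕ → ℕ → ℝ)
    (hN : ∀ n k, N n k = max (u k + hseq n k) 0 - max (u k) 0 -
        (if 0 < u k + hseq n k then hseq n k
         else if u k + hseq n k = 0 then δ * hseq n k else 0)) :
    -- `‖hⁿ‖_p = 2|u_n|` and this tends to `0`,
    (∀ n, ∀ hmem : Memℓp (hseq n) p,
        ‖(⟨hseq n, hmem⟩ : lp (fun _ : ℕ => ℝ) p)‖ = 2 * |u n|) ∧
    Filter.Tendsto (fun n => 2 * |u n|) Filter.atTop (nhds 0) ∧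
    -- while the remainder quotient is identically `1/2` on `{n | u n ≠ 0}`:
    ∀ n, u n ≠ 0 → ∀ hmemN : Memℓp (N n) q,
        ‖(⟨N n, hmemN⟩ : lp (fun _ : ℕ => ℝ) q)‖ / (2 * |u n|) = 1 / 2 := by
  have hp0 : 0 < p.toReal := ENNReal.toReal_pos (zero_lt_one.trans_le hp).ne' hp'
  refine ⟨?_, ?_, ?_⟩
  · intro n hmem
    have h1 : ∀ k, hseq n k = if k = n then -2 * u n else 0 := by
      intro k
      rw [hhseq]
      by_cases hk : k = n
      · subst hk; simp
      · simp [hk]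
    rw [aux_norm_single_coord p hp n (-2 * u n) (hseq n) h1 hmem]
    rw [abs_mul]
    norm_num
  · -- `u k → 0` since `u ∈ ℓᵖ`, `p < ∞`.
    have hsum : Summable fun k => ‖u k‖ ^ p.toReal := (lp.memℓp u).summable hp0
    have h0 : Filter.Tendsto (fun k => ‖u k‖ ^ p.toReal) Filter.atTop (nhds 0) := by
      have := hsum.tendsto_cofinite_zero
      rwa [Nat.cofinite_eq_atTop] at this
    have h1 : Filter.Tendsto (fun k => (‖u k‖ ^ p.toReal) ^ (1 / p.toReal))
        Filter.atTop (nhds 0) := by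
      have h := h0.rpow_const (p := 1 / p.toReal) (Or.inr (by positivity))
      rwa [Real.zero_rpow (by positivity : (1 / p.toReal) ≠ 0)] at h
    have h2 : Filter.Tendsto (fun k => |u k|) Filter.atTop (nhds 0) := by
      refine h1.congr fun k => ?_
      rw [← Real.rpow_mul (norm_nonneg _), mul_one_div, div_self hp0.ne', Real.rpow_one,
        Real.norm_eq_abs]
    have := h2.const_mul 2
    simpa using this
  · intro n hn hmemN
    have hNval : ∀ k, N n k = if k = n then -|u n| else 0 := by
      intro k
      rw [hN, hhseq]
      by_cases hk : k = n
      · subst hk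
        rw [if_pos rfl]
        simp only [if_true]
        rcases hn.lt_or_gt with h | h
        · have h1 : u k + -2 * u k = -u k := by ring
          rw [h1]
          rw [if_pos (by linarith)]
          rw [max_eq_left (by linarith), max_eq_right (by linarith)]
          rw [abs_of_neg h]
          ring
        · have h1 : u k + -2 * u k = -u k := by ring
          rw [h1]
          rw [if_neg (by linarith), if_neg (by intro hc; linarith)]
          rw [max_eq_right (by linarith), max_eq_left (by linarith)]
          rw [abs_of_pos h]
          ring
      · simp only [if_neg hk, add_zero, mul_zero]
        by_cases h : 0 < u k
        · simp [h]
        · by_cases h2 : u k = 0 <;> simp [h, h2]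
    rw [aux_norm_single_coord q hq n (-|u n|) (N n) hNval hmemN]
    rw [abs_neg, abs_abs]
    have : |u n| ≠ 0 := abs_ne_zero.mpr hn
    field_simp
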